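/- (Sharpness of the boundary Schwarz–Pick rigidity) The function f(z) = z², a holomorphic self-map of 𝔻 which is not a conformal automorphism of 𝔻, satisfies f^h(z) = 2|z|/(1 + |z|²) = 1 − (1 − |z|)²/(1 + |z|²) for all z ∈ 𝔻; in particular f^h(z) = 1 + O((1 − |z|)²) as |z| → 1. Hence the error term o((1 − |z_n|)²) in the boundary Schwarz–Pick rigidity theorem cannot be replaced by O((1 − |z_n|)²). -/
import Mathlib


open Metric Filter

/-- The hyperbolic derivative `f^h(z) = (1 − |z|²)|f'(z)|/(1 − |f(z)|²)`. -/
noncomputable def hDeriv (f : ℂ → ℂ) (z : ℂ) : ℝ :=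
  (1 - ‖z‖ ^ 2) * ‖deriv f z‖ / (1 - ‖f z‖ ^ 2)

lemma hDeriv_sq (z : ℂ) (hz : ‖z‖ < 1) :
    hDeriv (fun w : ℂ => w ^ 2) z = 2 * ‖z‖ / (1 + ‖z‖ ^ 2) := by
  have hd : deriv (fun w : ℂ => w ^ 2) z = 2 * z := by
    simp [deriv_pow]
  have hn : ‖z ^ 2‖ = ‖z‖ ^ 2 := by simp [norm_pow]
  have h0 : (0:ℝ) ≤ ‖z‖ := norm_nonneg z
  rw [hDeriv, hd]
  simp only [norm_mul, Complex.norm_ofNat, hn]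
  have h1 : 1 + ‖z‖ ^ 2 > 0 := by positivity
  have h2 : 1 - ‖z‖ ^ 2 > 0 := by nlinarith
  have h3 : 1 - (‖z‖ ^ 2) ^ 2 > 0 := by nlinarith
  rw [div_eq_div_iff (by nlinarith) (by nlinarith)]
  ring

/-- **Sharpness of the boundary Schwarz–Pick rigidity.** The map `f(z) = z²` is a
holomorphic self-map of the open unit disk which is not a conformal automorphism, yet
its hyperbolic derivative satisfies `f^h(z) = 2|z|/(1 + |z|²) = 1 − (1 − |z|)²/(1 + |z|²)`
on the disk; in particular `f^h(z) = 1 + O((1 − |z|)²)` as `|z| → 1`. Hence the error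
term `o((1 − |z_n|)²)` in the boundary rigidity theorem cannot be weakened to
`O((1 − |z_n|)²)`. -/
theorem square_map_sharpness :
    (∀ z ∈ Metric.ball (0 : ℂ) 1, (fun w : ℂ => w ^ 2) z ∈ Metric.ball (0 : ℂ) 1) ∧
    (∀ z : ℂ, DifferentiableAt ℂ (fun w : ℂ => w ^ 2) z) ∧
    (¬ ∃ (η : ℂ) (z₀ : ℂ), ‖η‖ = 1 ∧ ‖z₀‖ < 1 ∧
      ∀ z ∈ Metric.ball (0 : ℂ) 1,
        z ^ 2 = η * (z₀ - z) / (1 - (starRingEnd ℂ) z₀ * z)) ∧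
    (∀ z ∈ Metric.ball (0 : ℂ) 1,
      hDeriv (fun w : ℂ => w ^ 2) z = 2 * ‖z‖ / (1 + ‖z‖ ^ 2) ∧
      hDeriv (fun w : ℂ => w ^ 2) z = 1 - (1 - ‖z‖) ^ 2 / (1 + ‖z‖ ^ 2)) ∧
    (∃ C : ℝ, ∀ z ∈ Metric.ball (0 : ℂ) 1,
      |1 - hDeriv (fun w : ℂ => w ^ 2) z| ≤ C * (1 - ‖z‖) ^ 2) := by
  have hball : ∀ z : ℂ, z ∈ Metric.ball (0 : ℂ) 1 ↔ ‖z‖ < 1 := by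
    intro z; simp [Metric.mem_ball, dist_eq_norm]
  have key : ∀ z : ℂ, ‖z‖ < 1 →
      hDeriv (fun w : ℂ => w ^ 2) z = 1 - (1 - ‖z‖) ^ 2 / (1 + ‖z‖ ^ 2) := by
    intro z hz
    rw [hDeriv_sq z hz]
    have h1 : (1:ℝ) + ‖z‖ ^ 2 > 0 := by positivity
    field_simp
    ring
  refine ⟨?_, ?_, ?_, ?_, ?_⟩
  · intro z hz
    rw [hball] at hz ⊢
    calc ‖z ^ 2‖ = ‖z‖ ^ 2 := by simp
    _ < 1 := by nlinarith [norm_nonneg z]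
  · intro z; exact (differentiable_pow 2).differentiableAt
  · rintro ⟨η, z₀, hη, hz₀, h⟩
    have h0 := h 0 (by simp)
    simp at h0
    have hz₀0 : z₀ = 0 := by
      rcases h0 with h0 | h0
      · exfalso; rw [h0] at hη; simp at hη
      · exact h0
    subst hz₀0
    have hhalf := h (1/2) (by rw [hball]; norm_num)
    simp at hhalf
    have : η = -(1/2 : ℂ) := by
      linear_combination 2 * hhalf
    rw [this] at hη
    norm_num at hη
  · intro z hz
    rw [hball] at hz
    exact ⟨hDeriv_sq z hz, key z hz⟩
  · refine ⟨1, fun z hz => ?_⟩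
    rw [hball] at hz
    rw [key z hz]
    have h1 : (1:ℝ) + ‖z‖ ^ 2 > 0 := by positivity
    have : 1 - (1 - (1 - ‖z‖) ^ 2 / (1 + ‖z‖ ^ 2)) = (1 - ‖z‖) ^ 2 / (1 + ‖z‖ ^ 2) := by ring
    rw [this, abs_of_nonneg (by positivity), one_mul]
    rw [div_le_iff₀ h1]
    nlinarith [sq_nonneg (1 - ‖z‖), norm_nonneg z]
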